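/- For every a.e. strongly measurable x : Ω → A the set spm(x) is non-empty: there exists a measurable a : Ω → ℂ such that for every measurable set S ⊆ Ω with μ(S) > 0 there is no a.e. strongly measurable y : Ω → A with (a(ω)·1 − x(ω))y(ω) = y(ω)(a(ω)·1 − x(ω)) = 1 for a.e. ω ∈ S. (Non-emptiness part of Theorem 2.5, specialized to the Banach–Kantorovich algebra L⁰(Ω, A), where nonzero idempotents correspond to indicators of positive-measure sets.) -/

import Mathlib

open MeasureTheory Filter Topology

open scoped ENNReal

/-- `a ∈ spm(x)`: for every measurable set `S` of positive measure there is no a.e.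
strongly measurable local inverse of `a·1 − x` on `S`. -/
def MemSpm {Ω : Type*} [MeasurableSpace Ω] (μ : Measure Ω)
    {A : Type*} [NormedRing A] [NormedAlgebra ℂ A]
    (x : Ω → A) (a : Ω → ℂ) : Prop :=
  ∀ S : Set Ω, MeasurableSet S → 0 < μ S →
    ¬ ∃ y : Ω → A, AEStronglyMeasurable y μ ∧
      ∀ᵐ ω ∂μ, ω ∈ S →
        ((a ω • (1 : A) - x ω) * y ω = 1 ∧ y ω * (a ω • (1 : A) - x ω) = 1)

/-- For a strongly measurable function into a complex unital Banach algebra there is a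
measurable selection of the (pointwise) spectrum. -/
theorem exists_measurable_mem_spectrum {Ω : Type*} [MeasurableSpace Ω]
    {A : Type*} [NormedRing A] [NormedAlgebra ℂ A] [CompleteSpace A] [NormOneClass A]
    {g : Ω → A} (hg : StronglyMeasurable g) :
    ∃ a : Ω → ℂ, Measurable a ∧ ∀ ω, a ω ∈ spectrum ℂ (g ω) := by
  classical
  haveI : Nontrivial A :=
    nontrivial_of_ne (1 : A) 0 fun h => by simpa [h] using (norm_one (α := A))
  set gs : ℕ → SimpleFunc Ω A := hg.approx with hgs
  have htend : ∀ ω, Tendsto (fun n => gs n ω) atTop (𝓝 (g ω)) := hg.tendsto_approx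
  -- a measurable selection of the spectrum of each simple approximation
  let c : A → ℂ := fun v => (spectrum.nonempty v).some
  have hc : ∀ v : A, c v ∈ spectrum ℂ v := fun v => (spectrum.nonempty v).some_mem
  let aF : ℕ → Ω → ℂ := fun n ω => c (gs n ω)
  have haFmeas : ∀ n, Measurable (aF n) := by
    intro n
    have := ((gs n).map c).measurable
    simpa [SimpleFunc.coe_map, Function.comp_def, aF] using this
  have haFmem : ∀ n ω, aF n ω ∈ spectrum ℂ (gs n ω) := fun n ω => hc (gs n ω)
  -- the "liminf distance to the sequence" function
  let D : ℂ → Ω → ℝ≥0∞ := fun z ω => Filter.liminf (fun n => edist z (aF n ω)) atTop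
  have hDmeas : ∀ z, Measurable (D z) := fun z =>
    Measurable.liminf fun n => measurable_const.edist (haFmeas n)
  have hfreq : ∀ (z : ℂ) ω {r : ℝ≥0∞}, D z ω < r → ∃ᶠ n in atTop, edist z (aF n ω) < r :=
    fun z ω r h => frequently_lt_of_liminf_lt (by isBoundedDefault) h
  have htri : ∀ (z z' : ℂ) ω (r : ℝ≥0∞),
      (∃ᶠ n in atTop, edist z' (aF n ω) < r) → D z ω ≤ edist z z' + r := by
    intro z z' ω r h
    refine liminf_le_of_frequently_le (h.mono fun n hn => ?_)
    calc edist z (aF n ω) ≤ edist z z' + edist z' (aF n ω) := edist_triangle _ _ _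
      _ ≤ edist z z' + r := by gcongr
  -- cluster points
  have hclu : ∀ ω (s : Set ℂ), Bornology.IsBounded s → (∃ᶠ n in atTop, aF n ω ∈ s) →
      ∃ cl ∈ closure s, ∀ r : ℝ≥0∞, 0 < r → ∃ᶠ n in atTop, edist cl (aF n ω) < r := by
    intro ω s hs hf
    obtain ⟨cl, hcs, φ, hφ, hφt⟩ := tendsto_subseq_of_frequently_bounded hs hf
    refine ⟨cl, hcs, fun r hr => ?_⟩
    have h1 : ∀ᶠ j in atTop, edist cl (aF (φ j) ω) < r := by
      obtain ⟨N, hN⟩ := (EMetric.tendsto_atTop.1 hφt) r hr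
      filter_upwards [eventually_ge_atTop N] with j hj
      have := hN j hj
      rwa [edist_comm] at this
    exact hφ.tendsto_atTop.frequently h1.frequently
  have hbound : ∀ ω, ∃ R : ℝ, ∀ n, aF n ω ∈ Metric.closedBall (0 : ℂ) R := by
    intro ω
    have h1 : Tendsto (fun n => ‖gs n ω‖) atTop (𝓝 ‖g ω‖) :=
      (continuous_norm.tendsto _).comp (htend ω)
    obtain ⟨R, hR⟩ := h1.bddAbove_range
    refine ⟨R, fun n => ?_⟩
    have h2 : ‖aF n ω‖ ≤ ‖gs n ω‖ := spectrum.norm_le_norm_of_mem (haFmem n ω)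
    simp only [Metric.mem_closedBall, dist_zero_right]
    exact h2.trans (hR ⟨n, rfl⟩)
  -- dense sequence in ℂ
  let q : ℕ → ℂ := TopologicalSpace.denseSeq ℂ
  have hq : DenseRange q := TopologicalSpace.denseRange_denseSeq ℂ
  -- from a cluster point, find a close member of the dense sequence with small `D`
  have hqD : ∀ ω (cl : ℂ), (∀ s : ℝ≥0∞, 0 < s → ∃ᶠ n in atTop, edist cl (aF n ω) < s) →
      ∀ r : ℝ≥0∞, 0 < r → r ≠ ⊤ → ∃ k, edist (q k) cl < r ∧ D (q k) ω < r := by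
    intro ω cl hcl r hr hrt
    have hrr : 0 < r.toReal := ENNReal.toReal_pos hr.ne' hrt
    obtain ⟨k, hk⟩ := hq.exists_dist_lt cl (half_pos hrr)
    have hek : edist (q k) cl < r := by
      rw [← ENNReal.ofReal_toReal hrt, edist_lt_ofReal, dist_comm]
      linarith
    have hDle : D (q k) ω ≤ edist (q k) cl := by
      refine ENNReal.le_of_forall_pos_le_add fun ε hε _ => ?_
      exact htri _ cl ω ε (hcl ε (by exact_mod_cast hε))
    exact ⟨k, hek, lt_of_le_of_lt hDle hek⟩
  have hexany : ∀ ω (r : ℝ≥0∞), 0 < r → r ≠ ⊤ → ∃ k, D (q k) ω < r := by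
    intro ω r hr hrt
    obtain ⟨R, hR⟩ := hbound ω
    obtain ⟨cl, _, hcl⟩ := hclu ω _ (Metric.isBounded_closedBall (x := (0:ℂ)) (r := R))
      (Frequently.of_forall fun n => hR n)
    obtain ⟨k, _, hk⟩ := hqD ω cl hcl r hr hrt
    exact ⟨k, hk⟩
  -- geometric scale
  let e : ℕ → ℝ≥0∞ := fun m => (2 : ℝ≥0∞)⁻¹ ^ m
  have hhalf_pos : (0 : ℝ≥0∞) < 2⁻¹ := ENNReal.inv_pos.2 ENNReal.ofNat_ne_top
  have hhalf_lt_one : (2 : ℝ≥0∞)⁻¹ < 1 := by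
    rw [ENNReal.inv_lt_one]; exact ENNReal.one_lt_two
  have he_pos : ∀ m, 0 < e m := fun m => ENNReal.pow_pos hhalf_pos m
  have he_top : ∀ m, e m ≠ ⊤ := fun m =>
    ENNReal.pow_ne_top (by simp [ENNReal.inv_ne_top])
  have h21 : (2 : ℝ≥0∞) * 2⁻¹ = 1 := ENNReal.mul_inv_cancel two_ne_zero ENNReal.ofNat_ne_top
  have h2e : ∀ m, 2 * e (m + 1) = e m := by
    intro m
    show 2 * ((2 : ℝ≥0∞)⁻¹ ^ (m + 1)) = (2 : ℝ≥0∞)⁻¹ ^ m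
    rw [pow_succ, mul_comm ((2 : ℝ≥0∞)⁻¹ ^ m) 2⁻¹, ← mul_assoc, h21, one_mul]
  have heS : ∀ m, e (m + 1) < e m := by
    intro m
    have h1 : e (m + 1) = e m / 2 := by
      show (2 : ℝ≥0∞)⁻¹ ^ (m + 1) = (2 : ℝ≥0∞)⁻¹ ^ m / 2
      rw [pow_succ, div_eq_mul_inv]
    rw [h1]
    exact ENNReal.half_lt_self (he_pos m).ne' (he_top m)
  -- the recursive step: existence statement (valid for an arbitrary previous function)
  have hstep : ∀ (p : Ω → ℂ) (m : ℕ) ω, ∃ k, D (q k) ω < e (m + 2) ∧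
      (D (p ω) ω < e (m + 1) → edist (q k) (p ω) < 2 * e (m + 1)) := by
    intro p m ω
    by_cases hp : D (p ω) ω < e (m + 1)
    · have hf : ∃ᶠ n in atTop, aF n ω ∈ {w : ℂ | edist (p ω) w < e (m + 1)} := hfreq _ ω hp
      have hsub : {w : ℂ | edist (p ω) w < e (m + 1)} ⊆
          Metric.closedBall (p ω) (e (m + 1)).toReal := by
        intro w hw
        simp only [Set.mem_setOf_eq] at hw
        simp only [Metric.mem_closedBall]
        rw [dist_comm, dist_edist]
        exact ENNReal.toReal_mono (he_top _) hw.le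
      have hbd : Bornology.IsBounded {w : ℂ | edist (p ω) w < e (m + 1)} :=
        (Metric.isBounded_closedBall (x := p ω) (r := (e (m + 1)).toReal)).subset hsub
      obtain ⟨cl, hcls, hcl⟩ := hclu ω _ hbd hf
      obtain ⟨k, hek, hDk⟩ := hqD ω cl hcl (e (m + 2)) (he_pos _) (he_top _)
      refine ⟨k, hDk, fun _ => ?_⟩
      have hclp : edist cl (p ω) ≤ e (m + 1) := by
        have h1 : cl ∈ Metric.closedBall (p ω) (e (m + 1)).toReal :=
          ((Metric.isClosed_closedBall (x := p ω) (ε := (e (m + 1)).toReal)).closure_subset_iff.2 hsub) hcls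
        have h2 : dist cl (p ω) ≤ (e (m + 1)).toReal := Metric.mem_closedBall.1 h1
        rw [← ENNReal.ofReal_toReal (he_top (m + 1)), edist_dist]
        exact ENNReal.ofReal_le_ofReal h2
      have h3 : e (m + 2) < e (m + 1) := heS (m + 1)
      calc edist (q k) (p ω) ≤ edist (q k) cl + edist cl (p ω) := edist_triangle _ _ _
        _ ≤ e (m + 2) + e (m + 1) := add_le_add hek.le hclp
        _ < e (m + 1) + e (m + 1) := ENNReal.add_lt_add_right (he_top _) h3
        _ = 2 * e (m + 1) := (two_mul _).symm
    · obtain ⟨k, hk⟩ := hexany ω (e (m + 2)) (he_pos _) (he_top _)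
      exact ⟨k, hk, fun h => absurd h hp⟩
  have hex0 : ∀ ω, ∃ k, D (q k) ω < e 1 := fun ω => hexany ω (e 1) (he_pos _) (he_top _)
  -- the recursively defined sequence of measurable functions
  let b : ℕ → Ω → ℂ := fun m => Nat.rec (fun ω => q (Nat.find (hex0 ω)))
    (fun m p => fun ω => q (Nat.find (hstep p m ω))) m
  have hinv : ∀ m ω, D (b m ω) ω < e (m + 1) := by
    intro m
    induction m with
    | zero => exact fun ω => Nat.find_spec (hex0 ω)
    | succ m ih => exact fun ω => (Nat.find_spec (hstep (b m) m ω)).1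
  have hcons : ∀ m ω, edist (b (m + 1) ω) (b m ω) < 2 * e (m + 1) :=
    fun m ω => (Nat.find_spec (hstep (b m) m ω)).2 (hinv m ω)
  have hbmeas : ∀ m, Measurable (b m) := by
    intro m
    induction m with
    | zero =>
      show Measurable fun ω => q (Nat.find (hex0 ω))
      exact (measurable_from_top (f := q)).comp
        (measurable_find hex0 fun k => measurableSet_lt (hDmeas _) measurable_const)
    | succ m ih =>
      show Measurable fun ω => q (Nat.find (hstep (b m) m ω))
      have h1 : Measurable fun ω => D (b m ω) ω :=
        Measurable.liminf fun n => ih.edist (haFmeas n)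
      refine (measurable_from_top (f := q)).comp (measurable_find _ fun k => ?_)
      have hA : MeasurableSet {ω | D (q k) ω < e (m + 2)} :=
        measurableSet_lt (hDmeas _) measurable_const
      have hB : MeasurableSet {ω | D (b m ω) ω < e (m + 1)} :=
        measurableSet_lt h1 measurable_const
      have hC2 : MeasurableSet {ω | edist (q k) (b m ω) < 2 * e (m + 1)} :=
        measurableSet_lt (measurable_const.edist ih) measurable_const
      have hset : {ω | D (q k) ω < e (m + 2) ∧
            (D (b m ω) ω < e (m + 1) → edist (q k) (b m ω) < 2 * e (m + 1))} =
          {ω | D (q k) ω < e (m + 2)} ∩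
            ({ω | D (b m ω) ω < e (m + 1)}ᶜ ∪ {ω | edist (q k) (b m ω) < 2 * e (m + 1)}) := by
        ext ω
        simp only [Set.mem_setOf_eq, Set.mem_inter_iff, Set.mem_union, Set.mem_compl_iff,
          imp_iff_not_or]
      rw [hset]
      exact hA.inter (hB.compl.union hC2)
  -- the sequence is Cauchy, take its limit
  have hcauchy : ∀ ω, CauchySeq fun m => b m ω := by
    intro ω
    refine cauchySeq_of_edist_le_geometric 2⁻¹ 1 hhalf_lt_one ENNReal.one_ne_top fun m => ?_
    rw [one_mul, edist_comm]
    exact le_of_lt (lt_of_lt_of_eq (hcons m ω) (h2e m))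
  have hlim : ∀ ω, ∃ l, Tendsto (fun m => b m ω) atTop (𝓝 l) :=
    fun ω => cauchySeq_tendsto_of_complete (hcauchy ω)
  choose a ha using hlim
  have hameas : Measurable a :=
    measurable_of_tendsto_metrizable hbmeas (tendsto_pi_nhds.2 ha)
  -- the limit has `D = 0`
  have hDa : ∀ ω, D (a ω) ω = 0 := by
    intro ω
    have hDle : ∀ m, D (a ω) ω ≤ edist (a ω) (b m ω) + e (m + 1) :=
      fun m => htri _ _ ω _ (hfreq _ ω (hinv m ω))
    have h1 : Tendsto (fun m => edist (a ω) (b m ω)) atTop (𝓝 0) := by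
      have h2 : Tendsto (fun m => edist (a ω) (b m ω)) atTop (𝓝 (edist (a ω) (a ω))) :=
        tendsto_const_nhds.edist (ha ω)
      rwa [edist_self] at h2
    have h2 : Tendsto (fun m => e (m + 1)) atTop (𝓝 0) := by
      have h3 : Tendsto e atTop (𝓝 0) :=
        ENNReal.tendsto_pow_atTop_nhds_zero_of_lt_one hhalf_lt_one
      exact h3.comp (tendsto_add_atTop_nat 1)
    have htt : Tendsto (fun m => edist (a ω) (b m ω) + e (m + 1)) atTop (𝓝 0) := by
      simpa using h1.add h2
    have h4 : D (a ω) ω ≤ 0 := ge_of_tendsto' htt hDle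
    exact le_antisymm h4 zero_le
  -- upper semicontinuity of the spectrum: the limit is in the spectrum
  refine ⟨a, hameas, fun ω => ?_⟩
  rw [spectrum.mem_iff]
  intro hu
  have hcont : Continuous fun p : ℂ × A => algebraMap ℂ A p.1 - p.2 :=
    ((continuous_algebraMap ℂ A).comp continuous_fst).sub continuous_snd
  have hO : IsOpen {p : ℂ × A | IsUnit (algebraMap ℂ A p.1 - p.2)} :=
    Units.isOpen.preimage hcont
  have hmem : ((a ω, g ω) : ℂ × A) ∈ {p : ℂ × A | IsUnit (algebraMap ℂ A p.1 - p.2)} := hu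
  obtain ⟨ε, hε, hball⟩ := Metric.isOpen_iff.1 hO (a ω, g ω) hmem
  have hfr : ∃ᶠ n in atTop, dist (a ω) (aF n ω) < ε := by
    have h1 : D (a ω) ω < ENNReal.ofReal ε := by
      rw [hDa ω]; exact ENNReal.ofReal_pos.2 hε
    exact (hfreq _ ω h1).mono fun n hn => edist_lt_ofReal.1 hn
  have hev : ∀ᶠ n in atTop, dist (g ω) (gs n ω) < ε := by
    obtain ⟨N, hN⟩ := (Metric.tendsto_atTop.1 (htend ω)) ε hε
    filter_upwards [eventually_ge_atTop N] with n hn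
    have := hN n hn
    rwa [dist_comm] at this
  obtain ⟨n, hn1, hn2⟩ := (hfr.and_eventually hev).exists
  have hball_mem : ((aF n ω, gs n ω) : ℂ × A) ∈ Metric.ball ((a ω, g ω) : ℂ × A) ε := by
    rw [Metric.mem_ball, Prod.dist_eq, max_lt_iff]
    constructor
    · rwa [dist_comm]
    · rwa [dist_comm]
  exact (spectrum.mem_iff.1 (haFmem n ω)) (hball hball_mem)

/-- For every a.e. strongly measurable `x : Ω → A` the set `spm(x)` is
non-empty: there is a measurable `a : Ω → ℂ` such that for every measurable set `S`
with `μ S > 0` there is no a.e. strongly measurable `y` inverting `a·1 − x` a.e. on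
`S`. (Non-emptiness part of Theorem 2.5.) -/
theorem stmt7 {Ω : Type*} [MeasurableSpace Ω] (μ : Measure Ω) [IsFiniteMeasure μ]
    (hμ : 0 < μ Set.univ)
    {A : Type*} [NormedRing A] [NormedAlgebra ℂ A] [CompleteSpace A] [NormOneClass A]
    (x : Ω → A) (hx : AEStronglyMeasurable x μ) :
    ∃ a : Ω → ℂ, Measurable a ∧ MemSpm μ x a := by
  obtain ⟨a, hameas, hspec⟩ := exists_measurable_mem_spectrum hx.stronglyMeasurable_mk
  refine ⟨a, hameas, ?_⟩
  intro S hS hμS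
  rintro ⟨y, hy, hyeq⟩
  have hae : ∀ᵐ ω ∂μ, (ω ∈ S →
      ((a ω • (1 : A) - x ω) * y ω = 1 ∧ y ω * (a ω • (1 : A) - x ω) = 1)) ∧
      x ω = hx.mk x ω := hyeq.and hx.ae_eq_mk
  set Q : Ω → Prop := fun ω => (ω ∈ S →
      ((a ω • (1 : A) - x ω) * y ω = 1 ∧ y ω * (a ω • (1 : A) - x ω) = 1)) ∧
      x ω = hx.mk x ω with hQ
  have h0 : μ {ω | ¬ Q ω} = 0 := by
    rw [← MeasureTheory.ae_iff]
    exact hae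
  have h1 : μ (S ∩ {ω | Q ω}) ≠ 0 := by
    intro h
    have h2 : μ (S \ {ω | Q ω}) = 0 :=
      measure_mono_null (fun ω hω => hω.2) h0
    have h3 := measure_le_inter_add_diff μ S {ω | Q ω}
    rw [h, h2, add_zero] at h3
    exact absurd (le_antisymm h3 zero_le) hμS.ne'
  obtain ⟨ω, hωS, hωQ⟩ := MeasureTheory.nonempty_of_measure_ne_zero h1
  obtain ⟨himp, hxg⟩ := hωQ
  obtain ⟨heq1, heq2⟩ := himp hωS
  have hu : IsUnit (algebraMap ℂ A (a ω) - hx.mk x ω) := by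
    rw [Algebra.algebraMap_eq_smul_one, ← hxg]
    exact ⟨⟨a ω • (1 : A) - x ω, y ω, heq1, heq2⟩, rfl⟩
  exact (spectrum.mem_iff.1 (hspec ω)) hu
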